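/- (Graham–Pollak theorem.) Suppose the edge set of the complete graph on n vertices is partitioned into m complete bipartite graphs: there are functions X, Y : Fin m → Finset (Fin n) with X k ∩ Y k = ∅ for each k, such that for every pair of distinct vertices u, v there is exactly one index k with either (u ∈ X k and v ∈ Y k) or (u ∈ Y k and v ∈ X k). Then m ≥ n − 1. -/
import Mathlib


/-- Graham–Pollak theorem: if the edge set of the complete graph on `n` vertices is
partitioned into `m` complete bipartite graphs, then `m ≥ n - 1`. -/
theorem graham_pollak (n m : ℕ) (X Y : Fin m → Finset (Fin n))
    (hdisj : ∀ k, X k ∩ Y k = ∅)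
    (hcover : ∀ u v : Fin n, u ≠ v →
      ∃! k : Fin m, (u ∈ X k ∧ v ∈ Y k) ∨ (u ∈ Y k ∧ v ∈ X k)) :
    n - 1 ≤ m := by
  by_contra hlt
  push_neg at hlt
  have h : m + 1 < n := by omega
  -- get a nonzero solution to the linear constraints
  set f : (Fin n → ℝ) →ₗ[ℝ] (Fin m → ℝ) × ℝ :=
    LinearMap.prod (LinearMap.pi fun k => ∑ u ∈ X k, LinearMap.proj u)
      (∑ v : Fin n, LinearMap.proj v) with hf
  have hni : ¬ Function.Injective f := by
    intro hinj
    have := LinearMap.finrank_le_finrank_of_injective hinj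
    simp [Module.finrank_prod, Module.finrank_pi] at this
    omega
  have hker : LinearMap.ker f ≠ ⊥ := by
    rw [Ne, LinearMap.ker_eq_bot]; exact hni
  obtain ⟨x, hx, hx0⟩ := Submodule.exists_mem_ne_zero_of_ne_bot hker
  have hXsum : ∀ k, ∑ u ∈ X k, x u = 0 := by
    intro k
    have := congrFun (congrArg Prod.fst (LinearMap.mem_ker.mp hx)) k
    simpa [hf, LinearMap.pi_apply] using this
  have htot : ∑ v, x v = 0 := by
    have := congrArg Prod.snd (LinearMap.mem_ker.mp hx)
    simpa [hf] using this
  -- counting identity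
  set T : Finset (Fin n × Fin n) := Finset.univ.filter (fun p => p.1 ≠ p.2) with hT
  have key : ∑ p ∈ T, x p.1 * x p.2
      = ∑ k, ((∑ u ∈ X k, x u) * (∑ v ∈ Y k, x v)
            + (∑ u ∈ Y k, x u) * (∑ v ∈ X k, x v)) := by
    have step1 : ∀ p ∈ T, x p.1 * x p.2
        = ∑ k, (if (p.1 ∈ X k ∧ p.2 ∈ Y k) ∨ (p.1 ∈ Y k ∧ p.2 ∈ X k)
            then x p.1 * x p.2 else 0) := by
      intro p hp
      rw [hT, Finset.mem_filter] at hp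
      obtain ⟨k₀, hk₀, huniq⟩ := hcover p.1 p.2 hp.2
      rw [Finset.sum_eq_single_of_mem k₀ (Finset.mem_univ _)]
      · rw [if_pos hk₀]
      · intro b _ hb
        rw [if_neg]
        intro hcond
        exact hb (huniq b hcond)
    rw [Finset.sum_congr rfl step1, Finset.sum_comm]
    refine Finset.sum_congr rfl fun k _ => ?_
    have hset : T.filter (fun p => (p.1 ∈ X k ∧ p.2 ∈ Y k) ∨ (p.1 ∈ Y k ∧ p.2 ∈ X k))
        = (X k ×ˢ Y k) ∪ (Y k ×ˢ X k) := by
      ext p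
      simp only [hT, Finset.mem_filter, Finset.mem_univ, true_and, Finset.mem_union,
        Finset.mem_product]
      constructor
      · rintro ⟨-, h⟩; exact h
      · intro hp
        refine ⟨?_, hp⟩
        intro heq
        have : p.1 ∈ X k ∩ Y k := by
          rw [heq] at hp ⊢
          rcases hp with ⟨h1, h2⟩ | ⟨h1, h2⟩
          exacts [Finset.mem_inter.mpr ⟨h1, h2⟩, Finset.mem_inter.mpr ⟨h2, h1⟩]
        simp [hdisj k] at this
    rw [Finset.sum_ite, Finset.sum_const_zero, add_zero, hset]
    have hdisj2 : Disjoint (X k ×ˢ Y k) (Y k ×ˢ X k) := by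
      rw [Finset.disjoint_left]
      rintro p hp hp'
      rw [Finset.mem_product] at hp hp'
      have : p.1 ∈ X k ∩ Y k := Finset.mem_inter.mpr ⟨hp.1, hp'.1⟩
      simp [hdisj k] at this
    rw [Finset.sum_union hdisj2, Finset.sum_product, Finset.sum_product]
    rw [← Finset.sum_mul_sum, ← Finset.sum_mul_sum]
  have hRHS : ∑ k, ((∑ u ∈ X k, x u) * (∑ v ∈ Y k, x v)
      + (∑ u ∈ Y k, x u) * (∑ v ∈ X k, x v)) = 0 := by
    refine Finset.sum_eq_zero fun k _ => ?_
    rw [hXsum k]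
    ring
  have hLHS : ∑ p ∈ T, x p.1 * x p.2 = - ∑ v, x v ^ 2 := by
    have hsplit := Finset.sum_filter_add_sum_filter_not Finset.univ
        (fun p : Fin n × Fin n => p.1 ≠ p.2) (fun p => x p.1 * x p.2)
    have hdiag : ∑ p ∈ Finset.univ.filter (fun p : Fin n × Fin n => ¬ p.1 ≠ p.2),
        x p.1 * x p.2 = ∑ v, x v ^ 2 := by
      rw [Finset.sum_filter, Fintype.sum_prod_type]
      simp [Finset.sum_ite_eq, sq]
    have hall : ∑ p : Fin n × Fin n, x p.1 * x p.2 = 0 := by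
      rw [Fintype.sum_prod_type]
      simp [← Finset.mul_sum, htot]
    rw [hdiag] at hsplit
    rw [hT]
    linarith [hsplit, hall]
  rw [hLHS, hRHS] at key
  have hzero : ∑ v, x v ^ 2 = 0 := by linarith
  have : x = 0 := by
    funext v
    have := (Finset.sum_eq_zero_iff_of_nonneg (fun i _ => sq_nonneg (x i))).mp hzero v
      (Finset.mem_univ v)
    exact pow_eq_zero_iff (by norm_num) |>.mp this
  exact hx0 this
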